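/- Let a < b be real numbers and let g : ℝ → ℝ be Lebesgue-integrable on [a,b]. Suppose there is a measurable set A ⊆ [a,b] whose complement in [a,b] has Lebesgue measure zero, such that g is nondecreasing on A (i.e., for all x, y ∈ A with x ≤ y, g(x) ≤ g(y)). Then the function f(x) := ∫_a^x g(t) dt is convex on [a,b]. Likewise, if g is nonincreasing on such a set A, then f is concave on [a,b]. -/

import Mathlib

open Set MeasureTheory

lemma aux_nonempty (a b : ℝ) (A : Set ℝ) (hA0 : volume (Icc a b \ A) = 0)
    {u v : ℝ} (huv : u < v) (hsub : Ioc u v ⊆ Icc a b) : (A ∩ Ioc u v).Nonempty := by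
  by_contra h
  rw [Set.not_nonempty_iff_eq_empty] at h
  have hsub2 : Ioc u v ⊆ Icc a b \ A := by
    intro t ht
    refine ⟨hsub ht, fun hta => ?_⟩
    exact absurd (Set.mem_inter hta ht) (by simp [h])
  have := measure_mono (μ := volume) hsub2
  rw [hA0, Real.volume_Ioc] at this
  simp only [nonpos_iff_eq_zero, ENNReal.ofReal_eq_zero] at this
  linarith

lemma aux_convex (a b : ℝ) (g : ℝ → ℝ)
    (hg : IntegrableOn g (Icc a b)) (A : Set ℝ) (hA : A ⊆ Icc a b)
    (hA0 : volume (Icc a b \ A) = 0)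
    (hmono : MonotoneOn g A) :
    ConvexOn ℝ (Icc a b) (fun x => ∫ t in a..x, g t) := by
  apply convexOn_of_slope_mono_adjacent (convex_Icc a b)
  intro x y z hx hz hxy hyz
  have hy : y ∈ Icc a b := ⟨le_trans hx.1 hxy.le, le_trans hyz.le hz.2⟩
  -- nonempty witnesses
  obtain ⟨s₀, hs₀A, hs₀⟩ := aux_nonempty a b A hA0 hyz
    (fun t ht => ⟨le_trans hy.1 ht.1.le, le_trans ht.2 hz.2⟩)
  obtain ⟨t₀, ht₀A, ht₀⟩ := aux_nonempty a b A hA0 hxy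
    (fun t ht => ⟨le_trans hx.1 ht.1.le, le_trans ht.2 hy.2⟩)
  set c := sSup (g '' (A ∩ Ioc x y)) with hc
  have hbdd : ∀ w ∈ g '' (A ∩ Ioc x y), w ≤ g s₀ := by
    rintro w ⟨t, ⟨htA, htI⟩, rfl⟩
    exact hmono htA hs₀A (le_trans htI.2 hs₀.1.le)
  have hbddA : BddAbove (g '' (A ∩ Ioc x y)) := ⟨g s₀, hbdd⟩
  have hne : (g '' (A ∩ Ioc x y)).Nonempty := ⟨g t₀, t₀, ⟨ht₀A, ht₀⟩, rfl⟩
  -- g ≤ c a.e. on Ioc x y ; c ≤ g a.e. on Ioc y z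
  have hIxy : IntegrableOn g (Ioc x y) := hg.mono_set
    (fun t ht => ⟨le_trans hx.1 ht.1.le, le_trans ht.2 hy.2⟩)
  have hIyz : IntegrableOn g (Ioc y z) := hg.mono_set
    (fun t ht => ⟨le_trans hy.1 ht.1.le, le_trans ht.2 hz.2⟩)
  have hIax : IntervalIntegrable g volume a x := by
    rw [intervalIntegrable_iff_integrableOn_Ioc_of_le hx.1]
    exact hg.mono_set (fun t ht => ⟨ht.1.le, le_trans ht.2 hx.2⟩)
  have hIay : IntervalIntegrable g volume a y := by
    rw [intervalIntegrable_iff_integrableOn_Ioc_of_le hy.1]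
    exact hg.mono_set (fun t ht => ⟨ht.1.le, le_trans ht.2 hy.2⟩)
  have hIaz : IntervalIntegrable g volume a z := by
    rw [intervalIntegrable_iff_integrableOn_Ioc_of_le hz.1]
    exact hg.mono_set (fun t ht => ⟨ht.1.le, le_trans ht.2 hz.2⟩)
  have haeXY : ∀ᵐ t ∂(volume.restrict (Ioc x y)), g t ≤ c := by
    rw [ae_restrict_iff' measurableSet_Ioc]
    refine ae_iff.mpr (measure_mono_null (fun t ht => ?_) hA0)
    simp only [Set.mem_setOf_eq, not_forall] at ht
    obtain ⟨htI, htc⟩ := ht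
    refine ⟨⟨le_trans hx.1 htI.1.le, le_trans htI.2 hy.2⟩, fun htA => ?_⟩
    exact htc (le_csSup hbddA ⟨t, ⟨htA, htI⟩, rfl⟩)
  have haeYZ : ∀ᵐ t ∂(volume.restrict (Ioc y z)), c ≤ g t := by
    rw [ae_restrict_iff' measurableSet_Ioc]
    refine ae_iff.mpr (measure_mono_null (fun t ht => ?_) hA0)
    simp only [Set.mem_setOf_eq, not_forall] at ht
    obtain ⟨htI, htc⟩ := ht
    refine ⟨⟨le_trans hy.1 htI.1.le, le_trans htI.2 hz.2⟩, fun htA => ?_⟩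
    refine htc (csSup_le hne ?_)
    rintro w ⟨s, ⟨hsA, hsI⟩, rfl⟩
    exact hmono hsA htA (le_trans hsI.2 htI.1.le)
  have h1 : ∫ t in x..y, g t ≤ c * (y - x) := by
    rw [intervalIntegral.intervalIntegral_eq_integral_uIoc, if_pos hxy.le,
      Set.uIoc_of_le hxy.le, one_smul]
    calc ∫ t in Ioc x y, g t ≤ ∫ _t in Ioc x y, c :=
          setIntegral_mono_ae_restrict hIxy (integrableOn_const (by simp)) haeXY
      _ = c * (y - x) := by
          rw [setIntegral_const, Real.volume_real_Ioc_of_le hxy.le, smul_eq_mul]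
          ring
  have h2 : c * (z - y) ≤ ∫ t in y..z, g t := by
    rw [intervalIntegral.intervalIntegral_eq_integral_uIoc, if_pos hyz.le,
      Set.uIoc_of_le hyz.le, one_smul]
    calc c * (z - y) = ∫ _t in Ioc y z, c := by
          rw [setIntegral_const, Real.volume_real_Ioc_of_le hyz.le, smul_eq_mul]
          ring
      _ ≤ ∫ t in Ioc y z, g t :=
          setIntegral_mono_ae_restrict (integrableOn_const (by simp)) hIyz haeYZ
  have e1 : (∫ t in a..y, g t) - ∫ t in a..x, g t = ∫ t in x..y, g t :=
    intervalIntegral.integral_interval_sub_left hIay hIax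
  have e2 : (∫ t in a..z, g t) - ∫ t in a..y, g t = ∫ t in y..z, g t :=
    intervalIntegral.integral_interval_sub_left hIaz hIay
  rw [show ((fun x => ∫ t in a..x, g t) y - (fun x => ∫ t in a..x, g t) x) = (∫ t in a..y, g t) - ∫ t in a..x, g t from rfl,
    show ((fun x => ∫ t in a..x, g t) z - (fun x => ∫ t in a..x, g t) y) = (∫ t in a..z, g t) - ∫ t in a..y, g t from rfl,
    e1, e2, div_le_div_iff₀ (by linarith) (by linarith)]
  nlinarith [mul_le_mul_of_nonneg_right h1 (le_of_lt (by linarith : (0:ℝ) < z - y)),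
    mul_le_mul_of_nonneg_right h2 (le_of_lt (by linarith : (0:ℝ) < y - x))]

theorem integral_of_ae_monotone_convex (a b : ℝ) (hab : a < b) (g : ℝ → ℝ)
    (hg : IntegrableOn g (Icc a b)) :
    (∀ A : Set ℝ, A ⊆ Icc a b → MeasurableSet A → volume (Icc a b \ A) = 0 →
        MonotoneOn g A → ConvexOn ℝ (Icc a b) (fun x => ∫ t in a..x, g t)) ∧
      (∀ A : Set ℝ, A ⊆ Icc a b → MeasurableSet A → volume (Icc a b \ A) = 0 →
        AntitoneOn g A → ConcaveOn ℝ (Icc a b) (fun x => ∫ t in a..x, g t)) := by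
  constructor
  · intro A hA hAm hA0 hmono
    exact aux_convex a b g hg A hA hA0 hmono
  · intro A hA hAm hA0 hanti
    have hconv : ConvexOn ℝ (Icc a b) (fun x => ∫ t in a..x, (-g) t) :=
      aux_convex a b (-g) hg.neg A hA hA0 (fun u hu v hv huv => neg_le_neg (hanti hu hv huv))
    rw [← neg_convexOn_iff]
    convert hconv using 2 with x
    · rfl
    · rfl
    rw [Pi.neg_apply, ← intervalIntegral.integral_neg]
    rfl
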